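/- There exists a constant B > 0 such that for all τ with 0 < τ < 1 and all complex θ with |θ| < π/2, one has |(2πτ)^{-1/2} Σ_{n∈ℤ, n≠0} e^{−(θ−2πn)²/(2τ)}| ≤ B e^{−π²/(2τ)}. -/

import Mathlib

set_option maxHeartbeats 1000000


open Filter Metric

/-- the `d = 1` remainder bound in Lemma 3 of Hall–Mitchell.
There is `B > 0` such that for all `0 < τ < 1` and all complex `θ` with `|θ| < π/2`,
`|(2πτ)^{-1/2} Σ_{n≠0} e^{−(θ−2πn)²/(2τ)}| ≤ B e^{−π²/(2τ)}`. -/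
theorem R1_exponentially_small :
    ∃ B : ℝ, 0 < B ∧
      ∀ τ : ℝ, 0 < τ → τ < 1 →
        ∀ θ : ℂ, ‖θ‖ < Real.pi / 2 →
          ‖((↑(Real.sqrt (2 * Real.pi * τ)) : ℂ)⁻¹ *
                ∑' n : {n : ℤ // n ≠ 0},
                  Complex.exp (-(θ - 2 * (Real.pi : ℂ) * ((n : ℤ) : ℂ)) ^ 2 / (2 * (τ : ℂ))))‖ ≤
            B * Real.exp (-Real.pi ^ 2 / (2 * τ)) := by
  have hπ := Real.pi_pos
  refine ⟨4, by norm_num, ?_⟩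
  intro τ hτ hτ1 θ hθ
  set r : ℝ := Real.exp (-Real.pi ^ 2 / τ) with hrdef
  have hr_pos : 0 < r := Real.exp_pos _
  have hπ2 : (4 : ℝ) < Real.pi ^ 2 := by nlinarith [Real.pi_gt_three]
  have hu : Real.pi ^ 2 / τ > 4 := by
    have : Real.pi ^ 2 / τ > Real.pi ^ 2 := by
      rw [gt_iff_lt, lt_div_iff₀ hτ]; nlinarith
    linarith
  have hr_half : r ≤ 1 / 2 := by
    rw [hrdef]
    have : Real.exp (-(Real.pi ^ 2 / τ)) ≤ Real.exp (-4) := by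
      apply Real.exp_le_exp.mpr; linarith
    rw [neg_div] at *
    have h5 : (2 : ℝ) ≤ Real.exp 4 := by nlinarith [Real.add_one_le_exp (4 : ℝ)]
    calc Real.exp (-(Real.pi ^ 2 / τ)) ≤ Real.exp (-4) := this
      _ = (Real.exp 4)⁻¹ := Real.exp_neg 4
      _ ≤ 2⁻¹ := inv_anti₀ (by norm_num) h5
      _ = 1 / 2 := by norm_num
  have hr_lt_one : r < 1 := by linarith
  -- the dominating geometric series over nonzero integers
  set g : ℤ → ℝ := Set.indicator {n : ℤ | n ≠ 0} (fun n => r ^ n.natAbs) with hgdef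
  have hgeom : HasSum (fun n : ℕ => r * r ^ n) (r * (1 - r)⁻¹) :=
    (hasSum_geometric_of_lt_one hr_pos.le hr_lt_one).mul_left r
  have hnat : HasSum (fun n : ℕ => g n) (r * (1 - r)⁻¹) := by
    have h1 : HasSum (fun n : ℕ => g (((n + 1 : ℕ) : ℤ))) (r * (1 - r)⁻¹) := by
      convert hgeom using 2 with n
      have hne : (((n + 1 : ℕ) : ℤ)) ≠ 0 := by omega
      rw [hgdef, Set.indicator_of_mem (by simpa using hne)]
      rw [show (((n + 1 : ℕ) : ℤ)).natAbs = n + 1 by omega, pow_succ, mul_comm]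
    have := (hasSum_nat_add_iff (f := fun n : ℕ => g n) 1).mp h1
    simpa [hgdef, Set.indicator_apply] using this
  have hneg : HasSum (fun n : ℕ => g (-((n : ℤ) + 1))) (r * (1 - r)⁻¹) := by
    convert hgeom using 2 with n
    have hne : (-((n : ℤ) + 1)) ≠ 0 := by omega
    rw [hgdef, Set.indicator_of_mem (by simpa using hne)]
    rw [show (-((n : ℤ) + 1)).natAbs = n + 1 by omega, pow_succ, mul_comm]
  have hg : HasSum g (r * (1 - r)⁻¹ + r * (1 - r)⁻¹) :=
    HasSum.of_nat_of_neg_add_one hnat hneg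
  have hgsub : HasSum (fun n : {n : ℤ // n ≠ 0} => r ^ (n : ℤ).natAbs)
      (r * (1 - r)⁻¹ + r * (1 - r)⁻¹) := by
    rw [show (fun n : {n : ℤ // n ≠ 0} => r ^ (n : ℤ).natAbs)
        = ((fun n : ℤ => r ^ n.natAbs) ∘ ((↑) : {n : ℤ | n ≠ 0} → ℤ)) from rfl]
    exact hasSum_subtype_iff_indicator.mpr hg
  -- pointwise bound
  have hbound : ∀ n : {n : ℤ // n ≠ 0},
      ‖Complex.exp (-(θ - 2 * (Real.pi : ℂ) * ((n : ℤ) : ℂ)) ^ 2 / (2 * (τ : ℂ)))‖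
        ≤ r ^ (n : ℤ).natAbs := by
    rintro ⟨n, hn⟩
    set w : ℂ := θ - 2 * (Real.pi : ℂ) * (n : ℂ) with hw
    have hwre : w.re = θ.re - 2 * Real.pi * (n : ℝ) := by simp [hw]
    have hwim : w.im = θ.im := by simp [hw]
    have hre : (-(w) ^ 2 / (2 * (τ : ℂ))).re = (w.im ^ 2 - w.re ^ 2) / (2 * τ) := by
      rw [show (2 * (τ : ℂ)) = ((2 * τ : ℝ) : ℂ) by push_cast; ring,
        Complex.div_ofReal_re]
      simp [pow_two, Complex.mul_re]
    rw [Complex.norm_exp, hre]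
    have hm1 : 1 ≤ n.natAbs := by omega
    set m : ℝ := (n.natAbs : ℝ) with hm
    have hm1' : (1 : ℝ) ≤ m := by rw [hm]; exact_mod_cast hm1
    have habs_re : |θ.re| < Real.pi / 2 := lt_of_le_of_lt (Complex.abs_re_le_norm θ) hθ
    have habs_im : |θ.im| < Real.pi / 2 := lt_of_le_of_lt (Complex.abs_im_le_norm θ) hθ
    have him2 : θ.im ^ 2 ≤ Real.pi ^ 2 / 4 := by
      nlinarith [abs_nonneg θ.im, neg_abs_le θ.im, le_abs_self θ.im]
    have hnabs : |2 * Real.pi * (n : ℝ)| = 2 * Real.pi * m := by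
      rw [abs_mul, abs_of_pos (by linarith : (0:ℝ) < 2 * Real.pi), hm]
      congr 1
      rw [Nat.cast_natAbs, Int.cast_abs]
    have hwre_ge : 2 * Real.pi * m - Real.pi / 2 ≤ |w.re| := by
      rw [hwre]
      have h2 : |2 * Real.pi * (n : ℝ)| - |θ.re| ≤ |θ.re - 2 * Real.pi * (n : ℝ)| := by
        calc |2 * Real.pi * (n : ℝ)| - |θ.re|
            ≤ |(2 * Real.pi * (n : ℝ)) - θ.re| := abs_sub_abs_le_abs_sub _ _
          _ = |θ.re - 2 * Real.pi * (n : ℝ)| := abs_sub_comm _ _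
      rw [hnabs] at h2; linarith
    have hwre2 : (2 * Real.pi * m - Real.pi / 2) ^ 2 ≤ w.re ^ 2 := by
      have h0 : 0 ≤ 2 * Real.pi * m - Real.pi / 2 := by nlinarith
      nlinarith [sq_abs w.re, abs_nonneg w.re]
    have hkey : (w.im ^ 2 - w.re ^ 2) / (2 * τ) ≤ -Real.pi ^ 2 / τ * m := by
      rw [div_le_iff₀ (by linarith : (0:ℝ) < 2 * τ), hwim]
      have : -Real.pi ^ 2 / τ * m * (2 * τ) = -(2 * Real.pi ^ 2 * m) := by
        field_simp
      rw [this]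
      nlinarith [hwre2, him2, hm1',
        mul_nonneg (mul_nonneg (sq_nonneg Real.pi) (by linarith : (0:ℝ) ≤ m - 1))
          (by linarith : (0:ℝ) ≤ m)]
    calc Real.exp ((w.im ^ 2 - w.re ^ 2) / (2 * τ))
        ≤ Real.exp (-Real.pi ^ 2 / τ * m) := Real.exp_le_exp.mpr hkey
      _ = r ^ n.natAbs := by
          rw [hm, hrdef, mul_comm, Real.exp_nat_mul]
  -- bound the tsum
  have htsum := tsum_of_norm_bounded hgsub hbound
  have hsum_le : r * (1 - r)⁻¹ + r * (1 - r)⁻¹ ≤ 4 * r := by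
    have h1 : (1 - r)⁻¹ ≤ 2 := by
      rw [inv_le_comm₀ (by linarith) (by norm_num)]; linarith
    nlinarith
  -- put it all together
  rw [norm_mul]
  have hsqrt_pos : 0 < Real.sqrt (2 * Real.pi * τ) := Real.sqrt_pos.mpr (by positivity)
  have habs_inv : ‖((↑(Real.sqrt (2 * Real.pi * τ)) : ℂ)⁻¹)‖
      = (Real.sqrt (2 * Real.pi * τ))⁻¹ := by
    rw [norm_inv, Complex.norm_real, Real.norm_eq_abs, abs_of_pos hsqrt_pos]
  rw [habs_inv]
  have hexp_split : r = Real.exp (-Real.pi ^ 2 / (2 * τ)) * Real.exp (-Real.pi ^ 2 / (2 * τ)) := by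
    rw [hrdef, ← Real.exp_add]; congr 1; field_simp; ring
  set E : ℝ := Real.exp (-Real.pi ^ 2 / (2 * τ)) with hEdef
  have hEpos : 0 < E := Real.exp_pos _
  have hE : E ≤ Real.sqrt (2 * Real.pi * τ) := by
    have hr_le : r ≤ 2 * Real.pi * τ := by
      have h1 : Real.pi ^ 2 / τ ≤ Real.exp (Real.pi ^ 2 / τ) := by
        linarith [Real.add_one_le_exp (Real.pi ^ 2 / τ)]
      have h2 : r ≤ τ / Real.pi ^ 2 := by
        rw [hrdef, neg_div, Real.exp_neg]
        calc (Real.exp (Real.pi ^ 2 / τ))⁻¹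
            ≤ (Real.pi ^ 2 / τ)⁻¹ := inv_anti₀ (by positivity) h1
          _ = τ / Real.pi ^ 2 := by rw [inv_div]
      have h3 : τ / Real.pi ^ 2 ≤ τ := by
        rw [div_le_iff₀ (by positivity)]
        nlinarith
      nlinarith
    have hsq : E = Real.sqrt r := by
      rw [hrdef, hEdef, show -Real.pi ^ 2 / τ = -Real.pi ^ 2 / (2 * τ) + -Real.pi ^ 2 / (2 * τ) by
        field_simp; ring, Real.exp_add, Real.sqrt_mul_self (Real.exp_nonneg _)]
    rw [hsq]
    exact Real.sqrt_le_sqrt hr_le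
  have h9 : (Real.sqrt (2 * Real.pi * τ))⁻¹ * E ≤ 1 := by
    rw [mul_comm, ← div_eq_mul_inv, div_le_one hsqrt_pos]
    exact hE
  have habs_le : ‖
      (∑' n : {n : ℤ // n ≠ 0},
        Complex.exp (-(θ - 2 * (Real.pi : ℂ) * ((n : ℤ) : ℂ)) ^ 2 / (2 * (τ : ℂ))))‖ ≤ 4 * r := by
    exact htsum.trans hsum_le
  calc (Real.sqrt (2 * Real.pi * τ))⁻¹ *
        ‖(∑' n : {n : ℤ // n ≠ 0},
          Complex.exp (-(θ - 2 * (Real.pi : ℂ) * ((n : ℤ) : ℂ)) ^ 2 / (2 * (τ : ℂ))))‖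
      ≤ (Real.sqrt (2 * Real.pi * τ))⁻¹ * (4 * r) :=
        mul_le_mul_of_nonneg_left habs_le (inv_nonneg.mpr hsqrt_pos.le)
    _ = 4 * E * ((Real.sqrt (2 * Real.pi * τ))⁻¹ * E) := by rw [hexp_split]; ring
    _ ≤ 4 * E * 1 := mul_le_mul_of_nonneg_left h9 (by positivity)
    _ = 4 * E := mul_one _
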